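/- Let A ∈ sl(2,C) and let g = f^{1/2}π_L + f^{-1/2}π_{L⊥} be an unnormalized simple factor, where f has a simple pole at λ₀ and L is an eigenline of the conjugate transpose of A(λ₀) — equivalently, L⊥ is an eigenline of A(λ₀). Then gAg^{-1} = π_L A π_L + f·π_L A π_{L⊥} + f^{-1}·π_{L⊥} A π_L + π_{L⊥} A π_{L⊥}, and this expression is holomorphic at λ₀ (the pole of f is cancelled because π_L A(λ₀) π_{L⊥} = 0). -/

import Mathlib

open Matrix

lemma auxDslope {C : ℂ → ℂ} {x : ℂ} (h : AnalyticAt ℂ C x) :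
    AnalyticAt ℂ (dslope C x) x := by
  obtain ⟨p, hp⟩ := h
  exact ⟨p.fslope, hp.has_fpower_series_dslope_fslope⟩

lemma auxOrderNonneg {F G : ℂ → ℂ} {x : ℂ} (hG : AnalyticAt ℂ G x)
    (h : ∀ᶠ z in nhdsWithin x {x}ᶜ, F z = G z) :
    ∃ hm : MeromorphicAt F x, ((0 : ℤ) : WithTop ℤ) ≤ meromorphicOrderAt F x := by
  have hFG : F =ᶠ[nhdsWithin x {x}ᶜ] G := h
  have hm : MeromorphicAt F x := hG.meromorphicAt.congr hFG.symm
  refine ⟨hm, ?_⟩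
  by_cases htop : meromorphicOrderAt F x = ⊤
  · simp [htop]
  · obtain ⟨n, hn⟩ := WithTop.ne_top_iff_exists.mp htop
    rw [← hn]
    by_contra hneg
    push_neg at hneg
    have hn1 : n ≤ -1 := by
      have := WithTop.coe_lt_coe.mp hneg
      omega
    obtain ⟨g, hg_an, hg_ne, hg_eq⟩ := (meromorphicOrderAt_eq_int_iff hm).mp hn.symm
    set m : ℕ := (-n).toNat with hmdef
    have hmn : (m : ℤ) = -n := Int.toNat_of_nonneg (by omega)
    have hm1 : 1 ≤ m := by omega
    have key : ∀ᶠ z in nhdsWithin x {x}ᶜ, g z = (z - x) ^ m * G z := by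
      filter_upwards [hg_eq, h, self_mem_nhdsWithin] with z h1 h2 h3
      have hzx : z - x ≠ 0 := sub_ne_zero.mpr h3
      rw [← h2, h1]
      have : ((z - x) ^ m : ℂ) = (z - x) ^ (-n : ℤ) := by
        rw [← hmn, zpow_natCast]
      rw [this, smul_eq_mul, ← mul_assoc, ← zpow_add₀ hzx]
      simp
    have t1 : Filter.Tendsto g (nhdsWithin x {x}ᶜ) (nhds (g x)) :=
      (hg_an.continuousAt.continuousWithinAt).tendsto
    have t2 : Filter.Tendsto (fun z => (z - x) ^ m * G z) (nhdsWithin x {x}ᶜ)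
        (nhds ((x - x) ^ m * G x)) := by
      apply Filter.Tendsto.mono_left _ nhdsWithin_le_nhds
      exact (((continuous_id.sub continuous_const).pow m).continuousAt).mul
        hG.continuousAt
    have t2' : Filter.Tendsto g (nhdsWithin x {x}ᶜ) (nhds ((x - x) ^ m * G x)) :=
      t2.congr' (Filter.EventuallyEq.symm key)
    have : g x = (x - x) ^ m * G x := tendsto_nhds_unique t1 t2'
    rw [sub_self, zero_pow (by omega), zero_mul] at this
    exact hg_ne this

lemma auxEntryAnalytic {A : ℂ → Matrix (Fin 2) (Fin 2) ℂ} {lam0 : ℂ}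
    (hA : ∀ i j, AnalyticAt ℂ (fun lam => A lam i j) lam0)
    (M N : Matrix (Fin 2) (Fin 2) ℂ) (i j : Fin 2) :
    AnalyticAt ℂ (fun lam => (M * A lam * N) i j) lam0 := by
  have : (fun lam => (M * A lam * N) i j)
      = fun lam => ∑ l, (∑ k, M i k * A lam k l) * N l j := by
    funext lam
    simp [Matrix.mul_apply]
  rw [this]
  apply Finset.analyticAt_fun_sum
  intro l _
  exact (Finset.analyticAt_fun_sum _ fun k _ =>
    (analyticAt_const.mul (hA k l))).mul analyticAt_const

/-- **Special Delaunay dressing cancellation.**  If `g = f^{1/2}π_L + f^{-1/2}π_{L⊥}` is an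
unnormalized simple factor where `f` has a simple pole at `λ₀` and `L` is an eigenline of
`A(λ₀)ᴴ`, then `gAg⁻¹ = π_L A π_L + f·π_L A π_{L⊥} + f⁻¹·π_{L⊥} A π_L + π_{L⊥} A π_{L⊥}`,
the eigenline hypothesis gives `π_L A(λ₀) π_{L⊥} = 0`, and the expression is holomorphic at
`λ₀` (meromorphic of order `≥ 0`). -/
theorem stmt18 (lam0 : ℂ) (A : ℂ → Matrix (Fin 2) (Fin 2) ℂ)
    (hA : ∀ i j, AnalyticAt ℂ (fun lam => A lam i j) lam0)
    (htr : ∀ lam, (A lam).trace = 0)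
    (f s : ℂ → ℂ) (hs : ∀ lam, s lam ^ 2 = f lam)
    (e : ℂ → ℂ) (he : AnalyticAt ℂ e lam0) (he0 : e lam0 ≠ 0)
    (hf : ∀ᶠ lam in nhdsWithin lam0 {lam0}ᶜ, f lam = e lam / (lam - lam0))
    (Pm : Matrix (Fin 2) (Fin 2) ℂ)
    (hP1 : Pm * Pm = Pm) (hP2 : Pmᴴ = Pm) (hP3 : Pm.trace = 1)
    (c : ℂ) (heig : (A lam0)ᴴ * Pm = c • Pm)
    (g : ℂ → Matrix (Fin 2) (Fin 2) ℂ)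
    (hg : g = fun lam => s lam • Pm + (s lam)⁻¹ • ((1 : Matrix (Fin 2) (Fin 2) ℂ) - Pm))
    (Y : ℂ → Matrix (Fin 2) (Fin 2) ℂ)
    (hY : Y = fun lam =>
      Pm * A lam * Pm + f lam • (Pm * A lam * ((1 : Matrix (Fin 2) (Fin 2) ℂ) - Pm)) +
      (f lam)⁻¹ • (((1 : Matrix (Fin 2) (Fin 2) ℂ) - Pm) * A lam * Pm) +
      ((1 : Matrix (Fin 2) (Fin 2) ℂ) - Pm) * A lam *
        ((1 : Matrix (Fin 2) (Fin 2) ℂ) - Pm)) :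
    (∀ lam, s lam ≠ 0 → g lam * A lam * (g lam)⁻¹ = Y lam) ∧
    Pm * A lam0 * ((1 : Matrix (Fin 2) (Fin 2) ℂ) - Pm) = 0 ∧
    (∀ i j, ∃ hm : MeromorphicAt (fun lam => Y lam i j) lam0,
      ((0 : ℤ) : WithTop ℤ) ≤ meromorphicOrderAt (fun lam => Y lam i j) lam0) := by
  have hPQ : Pm * ((1 : Matrix (Fin 2) (Fin 2) ℂ) - Pm) = 0 := by
    simp [Matrix.mul_sub, hP1]
  have hQP : ((1 : Matrix (Fin 2) (Fin 2) ℂ) - Pm) * Pm = 0 := by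
    simp [Matrix.sub_mul, hP1]
  have hQQ : ((1 : Matrix (Fin 2) (Fin 2) ℂ) - Pm) * ((1 : Matrix (Fin 2) (Fin 2) ℂ) - Pm)
      = (1 : Matrix (Fin 2) (Fin 2) ℂ) - Pm := by
    simp [Matrix.sub_mul, Matrix.mul_sub, hP1]
  -- Part 2
  have hPA : Pm * A lam0 = (starRingEnd ℂ c) • Pm := by
    have h := congrArg conjTranspose heig
    simpa [conjTranspose_mul, hP2] using h
  have part2 : Pm * A lam0 * ((1 : Matrix (Fin 2) (Fin 2) ℂ) - Pm) = 0 := by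
    rw [hPA, Matrix.smul_mul, hPQ, smul_zero]
  refine ⟨?_, part2, ?_⟩
  · -- Part 1
    intro lam hsl
    have hginv : (g lam)⁻¹ = (s lam)⁻¹ • Pm + s lam • ((1 : Matrix (Fin 2) (Fin 2) ℂ) - Pm) := by
      apply inv_eq_right_inv
      rw [hg]
      simp only [Matrix.add_mul, Matrix.mul_add, Matrix.smul_mul, Matrix.mul_smul,
        smul_smul, hPQ, hQP, hQQ, hP1, smul_zero, add_zero, zero_add,
        mul_inv_cancel₀ hsl, inv_mul_cancel₀ hsl, one_smul]
      simp
    rw [hginv, hg, hY]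
    simp only [Matrix.add_mul, Matrix.mul_add, Matrix.smul_mul, Matrix.mul_smul,
      smul_add, smul_smul]
    rw [mul_inv_cancel₀ hsl, inv_mul_cancel₀ hsl]
    have h1 : s lam * s lam = f lam := by rw [← hs lam]; ring
    have h2 : (s lam)⁻¹ * (s lam)⁻¹ = (f lam)⁻¹ := by rw [← hs lam]; ring
    rw [h1, h2, one_smul, one_smul]
    abel
  · -- Part 3
    intro i j
    set Q : Matrix (Fin 2) (Fin 2) ℂ := (1 : Matrix (Fin 2) (Fin 2) ℂ) - Pm with hQdef
    set C : ℂ → ℂ := fun z => (Pm * A z * Q) i j with hCdef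
    have hC : AnalyticAt ℂ C lam0 := auxEntryAnalytic hA Pm Q i j
    have hC0 : C lam0 = 0 := by
      show (Pm * A lam0 * Q) i j = 0
      rw [part2]
      simp
    set G : ℂ → ℂ := fun z => (Pm * A z * Pm) i j + e z * dslope C lam0 z
        + ((z - lam0) * (e z)⁻¹) * ((Q * A z * Pm) i j) + (Q * A z * Q) i j with hGdef
    have hG : AnalyticAt ℂ G lam0 := by
      apply AnalyticAt.add
      apply AnalyticAt.add
      apply AnalyticAt.add
      · exact auxEntryAnalytic hA Pm Pm i j
      · exact he.mul (auxDslope hC)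
      · exact (((analyticAt_id.sub analyticAt_const).mul (he.inv he0))).mul
          (auxEntryAnalytic hA Q Pm i j)
      · exact auxEntryAnalytic hA Q Q i j
    apply auxOrderNonneg hG
    filter_upwards [hf, self_mem_nhdsWithin] with z hfz hz
    have hzx : z - lam0 ≠ 0 := sub_ne_zero.mpr hz
    have hCfac : C z = (z - lam0) * dslope C lam0 z := by
      have := sub_smul_dslope C lam0 z
      rw [hC0, sub_zero, smul_eq_mul] at this
      exact this.symm
    have hfmul : f z * C z = e z * dslope C lam0 z := by
      rw [hfz, hCfac]
      field_simp
    have hfinv : (f z)⁻¹ = (z - lam0) * (e z)⁻¹ := by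
      rw [hfz]
      simp [div_eq_mul_inv, mul_inv, mul_comm]
    rw [hY, hGdef]
    simp only [Matrix.add_apply, Matrix.smul_apply, smul_eq_mul, ← hQdef, ← hCdef]
    rw [hfmul, hfinv]
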